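/- Let Γ be a commutative thick weakly distance-regular digraph. If Γ_{1,p-1} ∈ Γ_{1,q-1} Γ_{q-1,1}, then Γ_{1,p-1}^2 ⊆ Γ_{1,q-1} Γ_{q-1,1}. -/
import Mathlib


/-!
Common framework: commutative thick weakly distance-regular digraphs.
-/

variable {V : Type*}

/-- There is a directed walk of length `n` from `x` to `y`. -/
def HasWalk (adj : V → V → Prop) (x y : V) (n : ℕ) : Prop :=
  ∃ f : ℕ → V, f 0 = x ∧ f n = y ∧ ∀ i < n, adj (f i) (f (i + 1))

/-- Directed distance `∂(x,y)`. -/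
noncomputable def ddist (adj : V → V → Prop) (x y : V) : ℕ :=
  sInf {n | HasWalk adj x y n}

/-- Two-way distance `∂̃(x,y) = (∂(x,y), ∂(y,x))`. -/
noncomputable def tdist (adj : V → V → Prop) (x y : V) : ℕ × ℕ :=
  (ddist adj x y, ddist adj y x)

/-- The pair `i` is an attained two-way distance, i.e. `i ∈ ∂̃(Γ)`. -/
def Attained (adj : V → V → Prop) (i : ℕ × ℕ) : Prop :=
  ∃ x y : V, tdist adj x y = i

/-- Intersection number `p^h_{i,j}`: for attained `h` it is the common cardinality of
`{z | ∂̃(x,z) = i, ∂̃(z,y) = j}` over pairs with `∂̃(x,y) = h` (and `0` otherwise). -/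
noncomputable def pnum (adj : V → V → Prop) (h i j : ℕ × ℕ) : ℕ :=
  sSup {n | ∃ x y : V, tdist adj x y = h ∧
    n = Set.ncard {z : V | tdist adj x z = i ∧ tdist adj z y = j}}

/-- Valency `k_i = |Γ_i(x)|`. -/
noncomputable def kval (adj : V → V → Prop) (i : ℕ × ℕ) : ℕ :=
  pnum adj (0, 0) i i.swap

/-- Adjacency of the subdigraph `Δ_J`: arcs of type `(1, t-1)` for `t ∈ J`. -/
def deltaAdj (adj : V → V → Prop) (J : Set ℕ) (u v : V) : Prop :=
  ∃ t ∈ J, tdist adj u v = (1, t - 1)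

/-- A circuit of length `s`. -/
def IsCircuit (adj : V → V → Prop) (s : ℕ) (f : ℕ → V) : Prop :=
  0 < s ∧ f s = f 0 ∧ ∀ i < s, adj (f i) (f (i + 1))

/-- Strongly connected. -/
def IsStrong (adj : V → V → Prop) : Prop :=
  ∀ x y : V, ∃ n, HasWalk adj x y n

/-- Weakly distance-regular: the intersection numbers are well defined. -/
def IsWDR (adj : V → V → Prop) : Prop :=
  ∀ (i j : ℕ × ℕ) (x y x' y' : V), tdist adj x y = tdist adj x' y' →
    Set.ncard {z : V | tdist adj x z = i ∧ tdist adj z y = j}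
      = Set.ncard {z : V | tdist adj x' z = i ∧ tdist adj z y' = j}

/-- Thick: `p^h_{i,i}, p^h_{i,i*} ∈ {0, k_i}`. -/
def IsThick (adj : V → V → Prop) : Prop :=
  ∀ h i : ℕ × ℕ,
    (pnum adj h i i = 0 ∨ pnum adj h i i = kval adj i) ∧
    (pnum adj h i i.swap = 0 ∨ pnum adj h i i.swap = kval adj i)

/-- A thick weakly distance-regular digraph (as a property of an adjacency relation). -/
def IsWDRThick (adj : V → V → Prop) : Prop :=
  IsStrong adj ∧ IsWDR adj ∧ IsThick adj

/-- A commutative thick weakly distance-regular digraph. -/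
structure CTWDR (V : Type*) [Fintype V] where
  adj : V → V → Prop
  loopless : ∀ v, ¬ adj v v
  strong : IsStrong adj
  wdr : IsWDR adj
  comm : ∀ (i j : ℕ × ℕ) (x y : V),
    Set.ncard {z : V | tdist adj x z = i ∧ tdist adj z y = j}
      = Set.ncard {z : V | tdist adj x z = j ∧ tdist adj z y = i}
  thick : IsThick adj

namespace CTWDR

variable {V : Type*} [Fintype V] (G : CTWDR V)

/-- Product `EF` of two sets of relations (relations identified with two-way distances). -/
def prodS (E F : Set (ℕ × ℕ)) : Set (ℕ × ℕ) :=
  {h | ∃ i ∈ E, ∃ j ∈ F, pnum G.adj h i j ≠ 0}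

/-- Powers `Γ_i^l` (with `Γ_i^0 = {Γ_{(0,0)}}` and `Γ_i^1 = {Γ_i}`). -/
def pow (i : ℕ × ℕ) : ℕ → Set (ℕ × ℕ)
  | 0 => {(0, 0)}
  | 1 => {i}
  | n + 2 => G.prodS (pow i (n + 1)) {i}

/-- The pair `(1, s-1)` is pure: every circuit of length `s` containing an arc of type
`(1, s-1)` consists of arcs of type `(1, s-1)`. -/
def Pure (s : ℕ) : Prop :=
  ∀ f : ℕ → V, IsCircuit G.adj s f →
    (∃ i < s, tdist G.adj (f i) (f (i + 1)) = (1, s - 1)) →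
    ∀ i < s, tdist G.adj (f i) (f (i + 1)) = (1, s - 1)

/-- `(1, s-1)` is mixed. -/
def Mixed (s : ℕ) : Prop := ¬ G.Pure s

/-- Configuration `C(q)` exists. -/
def Cexists (q : ℕ) : Prop :=
  pnum G.adj (1, q - 2) (1, q - 1) (1, q - 1) ≠ 0 ∧ G.Pure (q - 1)

/-- Configuration `D(q)` exists. -/
def Dexists (q : ℕ) : Prop :=
  pnum G.adj (1, q - 1) (1, q - 2) (q - 2, 1) ≠ 0 ∧ G.Pure (q - 1)

/-- A closed set of relations: `Γ_{i*}Γ_j ⊆ F` for all `i, j ∈ F`. -/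
def Closed (F : Set (ℕ × ℕ)) : Prop :=
  ∀ i ∈ F, ∀ j ∈ F, G.prodS {i.swap} {j} ⊆ F

/-- The minimal closed set `⟨F⟩` containing `F`. -/
def genClosed (F : Set (ℕ × ℕ)) : Set (ℕ × ℕ) :=
  ⋂₀ {C | F ⊆ C ∧ G.Closed C}

/-- The block `F_J(x)` of the closed set generated by `{Γ_{1,t-1}}_{t ∈ J}`. -/
def block (J : Set ℕ) (x : V) : Set V :=
  {y | tdist G.adj x y ∈ G.genClosed {i | ∃ t ∈ J, i = (1, t - 1)}}

end CTWDR

section Aux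

variable {V : Type*} [Fintype V]

lemma tdist_self (adj : V → V → Prop) (x : V) : tdist adj x x = (0, 0) := by
  have : ddist adj x x = 0 := by
    apply Nat.sInf_eq_zero.2
    left
    exact ⟨fun _ => x, rfl, rfl, fun i hi => absurd hi (Nat.not_lt_zero i)⟩
  simp [tdist, this]

lemma tdist_swap (adj : V → V → Prop) (x y : V) :
    tdist adj y x = (tdist adj x y).swap := rfl

lemma pnum_spec {adj : V → V → Prop} (wdr : IsWDR adj) {h : ℕ × ℕ} {x y : V}
    (hxy : tdist adj x y = h) (i j : ℕ × ℕ) :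
    pnum adj h i j = Set.ncard {z : V | tdist adj x z = i ∧ tdist adj z y = j} := by
  have hset : {n | ∃ x' y' : V, tdist adj x' y' = h ∧
      n = Set.ncard {z : V | tdist adj x' z = i ∧ tdist adj z y' = j}}
      = {Set.ncard {z : V | tdist adj x z = i ∧ tdist adj z y = j}} := by
    ext n
    constructor
    · rintro ⟨x', y', h', rfl⟩
      exact wdr i j x' y' x y (h'.trans hxy.symm)
    · rintro rfl
      exact ⟨x, y, hxy, rfl⟩
  rw [pnum, hset, csSup_singleton]

lemma kval_spec {adj : V → V → Prop} (wdr : IsWDR adj) (i : ℕ × ℕ) (x : V) :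
    kval adj i = Set.ncard {z : V | tdist adj x z = i} := by
  rw [kval, pnum_spec wdr (tdist_self adj x) i i.swap]
  congr 1
  ext z
  simp only [Set.mem_setOf_eq, and_iff_left_iff_imp]
  intro hz
  rw [tdist_swap, hz]

/-- Fullness from thickness: if `p^h_{i,i*} ≠ 0` then every `z` at two-way
distance `i` from `x` is at distance `i*` from `w`, whenever `∂̃(x,w) = h`. -/
lemma full_of_thick {adj : V → V → Prop} (wdr : IsWDR adj) (thick : IsThick adj)
    {h i : ℕ × ℕ} (hne : pnum adj h i i.swap ≠ 0) {x w z : V}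
    (hxw : tdist adj x w = h) (hxz : tdist adj x z = i) :
    tdist adj z w = i.swap := by
  have hk : pnum adj h i i.swap = kval adj i := (thick h i).2.resolve_left hne
  have h1 : Set.ncard {z : V | tdist adj x z = i ∧ tdist adj z w = i.swap}
      = Set.ncard {z : V | tdist adj x z = i} := by
    rw [← pnum_spec wdr hxw i i.swap, hk, kval_spec wdr i x]
  have hsub : {z : V | tdist adj x z = i ∧ tdist adj z w = i.swap}
      ⊆ {z : V | tdist adj x z = i} := fun z hz => hz.1
  have heq := Set.eq_of_subset_of_ncard_le hsub h1.ge (Set.toFinite _)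
  have : z ∈ {z : V | tdist adj x z = i} := hxz
  rw [← heq] at this
  exact this.2

lemma exists_tdist {adj : V → V → Prop} (wdr : IsWDR adj) {i : ℕ × ℕ}
    (hi : Attained adj i) (x : V) : ∃ z : V, tdist adj x z = i := by
  obtain ⟨x0, y0, h0⟩ := hi
  have hpos : 0 < Set.ncard {z : V | tdist adj x z = i} := by
    rw [← kval_spec wdr i x, kval_spec wdr i x0]
    exact (Set.ncard_pos (Set.toFinite _)).2 ⟨y0, h0⟩
  obtain ⟨z, hz⟩ := (Set.ncard_pos (Set.toFinite _)).1 hpos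
  exact ⟨z, hz⟩

end Aux

/-- Lemma 2.2: if `Γ_{1,p-1} ∈ Γ_{1,q-1}Γ_{q-1,1}`, then
`Γ_{1,p-1}^2 ⊆ Γ_{1,q-1}Γ_{q-1,1}`. -/
theorem stmt1 {V : Type*} [Fintype V] (G : CTWDR V) (p q : ℕ)
    (hp : Attained G.adj (1, p - 1)) (hq : Attained G.adj (1, q - 1))
    (h : (1, p - 1) ∈ G.prodS {(1, q - 1)} {(q - 1, 1)}) :
    G.pow (1, p - 1) 2 ⊆ G.prodS {(1, q - 1)} {(q - 1, 1)} := by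
  -- the key hypothesis: p^{(1,p-1)}_{(1,q-1),(q-1,1)} ≠ 0
  obtain ⟨i0, hi0, j0, hj0, hne⟩ := h
  rw [Set.mem_singleton_iff] at hi0 hj0
  subst hi0; subst hj0
  have hswap : ((1 : ℕ), q - 1).swap = (q - 1, 1) := rfl
  intro hpair hmem
  -- `pow i 2 = prodS {i} {i}`
  obtain ⟨i1, hi1, j1, hj1, hne1⟩ := hmem
  have hi1' : i1 = (1, p - 1) := hi1
  have hj1' : j1 = (1, p - 1) := hj1
  subst hi1'; subst hj1'
  -- get a representative pair (x, y) with a midpoint w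
  obtain ⟨x, y, hxy, hcard⟩ : ∃ x y : V, tdist G.adj x y = hpair ∧
      0 < Set.ncard {z : V | tdist G.adj x z = (1, p - 1) ∧
        tdist G.adj z y = (1, p - 1)} := by
    by_contra hcon
    push_neg at hcon
    apply hne1
    rw [pnum]
    have : {n | ∃ x y : V, tdist G.adj x y = hpair ∧
        n = Set.ncard {z : V | tdist G.adj x z = (1, p - 1) ∧
          tdist G.adj z y = (1, p - 1)}} ⊆ {0} := by
      rintro n ⟨x, y, hxy, rfl⟩
      have := hcon x y hxy
      simpa using Nat.le_zero.1 this
    rcases Set.subset_singleton_iff_eq.1 this with h0 | h0 <;> rw [h0] <;> simp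
  obtain ⟨w, hxw, hwy⟩ := (Set.ncard_pos (Set.toFinite _)).1 hcard
  have hxyh := hxy
  -- pick z with ∂̃(x,z) = (1, q-1)
  obtain ⟨z, hxz⟩ := exists_tdist G.wdr hq x
  -- fullness twice
  have h1 : tdist G.adj z w = (q - 1, 1) := by
    have := full_of_thick G.wdr G.thick (i := (1, q - 1)) (by rw [hswap]; exact hne)
      hxw hxz
    rwa [hswap] at this
  have hwz : tdist G.adj w z = (1, q - 1) := by
    rw [tdist_swap, h1]
    rcases q with _ | q <;> rfl
  have h2 : tdist G.adj z y = (q - 1, 1) := by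
    have := full_of_thick G.wdr G.thick (i := (1, q - 1)) (by rw [hswap]; exact hne)
      hwy hwz
    rwa [hswap] at this
  -- conclude
  refine ⟨(1, q - 1), rfl, (q - 1, 1), rfl, ?_⟩
  rw [pnum_spec G.wdr hxyh (1, q - 1) (q - 1, 1)]
  have hnon : ({z : V | tdist G.adj x z = (1, q - 1) ∧
      tdist G.adj z y = (q - 1, 1)}).Nonempty := ⟨z, hxz, h2⟩
  exact ((Set.ncard_pos (Set.toFinite _)).2 hnon).ne'
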